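/- Let β and γ be real numbers with 0 < β < γ, let μ be the probability measure (δ_{-β} + δ_{β})/2 on ℝ (the law of β times a Rademacher variate), let F be its cumulative distribution function, and define g(y) = (F(y+γ) - F(y-γ))/(2γ). Then -∫_ℝ g(y) log₂ g(y) dy = β/γ + log₂(2γ). -/

import Mathlib

open MeasureTheory

theorem entropy_of_smoothed_cdf_rademacher (β γ : ℝ) (hβ : 0 < β) (hβγ : β < γ)
    (μ : Measure ℝ)
    (hμ : μ = (2 : ENNReal)⁻¹ • (Measure.dirac (-β) + Measure.dirac β))
    (F : ℝ → ℝ) (hF : ∀ x, F x = (μ (Set.Iic x)).toReal)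
    (g : ℝ → ℝ) (hg : ∀ y, g y = (F (y + γ) - F (y - γ)) / (2 * γ)) :
    -∫ y, g y * Real.logb 2 (g y) = β / γ + Real.logb 2 (2 * γ) := by
  have hγ : 0 < γ := hβ.trans hβγ
  have hF' : ∀ x, F x = (if -β ≤ x then (1:ℝ)/2 else 0) + (if β ≤ x then 1/2 else 0) := by
    intro x
    rw [hF, hμ]
    simp only [Measure.smul_apply, Measure.add_apply,
      Measure.dirac_apply' _ measurableSet_Iic, Set.indicator_apply, Set.mem_Iic, smul_eq_mul]
    by_cases h1 : -β ≤ x <;> by_cases h2 : β ≤ x <;> simp [h1, h2] <;> norm_num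
  have hg' : ∀ y, g y = if -β-γ ≤ y ∧ y < β-γ then 1/(4*γ)
      else if β-γ ≤ y ∧ y < γ-β then 1/(2*γ)
      else if γ-β ≤ y ∧ y < γ+β then 1/(4*γ) else 0 := by
    intro y
    rw [hg, hF', hF']
    rcases lt_or_ge y (-β-γ) with h0 | h0
    · rw [if_neg (not_le.2 (by linarith)), if_neg (not_le.2 (by linarith)),
        if_neg (not_le.2 (by linarith)), if_neg (not_le.2 (by linarith)),
        if_neg (by rintro ⟨a, b⟩; linarith), if_neg (by rintro ⟨a, b⟩; linarith),
        if_neg (by rintro ⟨a, b⟩; linarith)]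
      simp
    rcases lt_or_ge y (β-γ) with h1 | h1
    · rw [if_pos (by linarith), if_neg (not_le.2 (by linarith)),
        if_neg (not_le.2 (by linarith)), if_neg (not_le.2 (by linarith)),
        if_pos ⟨by linarith, by linarith⟩]
      rw [div_eq_div_iff (by linarith) (by linarith)]; ring
    rcases lt_or_ge y (γ-β) with h2 | h2
    · rw [if_pos (by linarith), if_pos (by linarith),
        if_neg (not_le.2 (by linarith)), if_neg (not_le.2 (by linarith)),
        if_neg (by rintro ⟨a, b⟩; linarith), if_pos ⟨by linarith, by linarith⟩]
      rw [div_eq_div_iff (by linarith) (by linarith)]; ring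
    rcases lt_or_ge y (γ+β) with h3 | h3
    · rw [if_pos (by linarith), if_pos (by linarith), if_pos (by linarith),
        if_neg (not_le.2 (by linarith)),
        if_neg (by rintro ⟨a, b⟩; linarith), if_neg (by rintro ⟨a, b⟩; linarith),
        if_pos ⟨by linarith, by linarith⟩]
      rw [div_eq_div_iff (by linarith) (by linarith)]; ring
    · rw [if_pos (by linarith), if_pos (by linarith), if_pos (by linarith),
        if_pos (by linarith),
        if_neg (by rintro ⟨a, b⟩; linarith), if_neg (by rintro ⟨a, b⟩; linarith),
        if_neg (by rintro ⟨a, b⟩; linarith)]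
      simp
  set c1 : ℝ := (1/(4*γ)) * Real.logb 2 (1/(4*γ)) with hc1
  set c2 : ℝ := (1/(2*γ)) * Real.logb 2 (1/(2*γ)) with hc2
  have key : (fun y => g y * Real.logb 2 (g y)) =
      fun y => (Set.Ico (-β-γ) (β-γ)).indicator (fun _ => c1) y
        + (Set.Ico (β-γ) (γ-β)).indicator (fun _ => c2) y
        + (Set.Ico (γ-β) (γ+β)).indicator (fun _ => c1) y := by
    funext y
    rw [hg' y]
    simp only [Set.indicator_apply, Set.mem_Ico]
    rcases lt_or_ge y (β-γ) with h1 | h1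
    · have ncB : ¬(β-γ ≤ y ∧ y < γ-β) := by rintro ⟨a, b⟩; linarith
      have ncC : ¬(γ-β ≤ y ∧ y < γ+β) := by rintro ⟨a, b⟩; linarith
      rcases le_or_gt (-β-γ) y with h0 | h0
      · have cA : (-β-γ ≤ y ∧ y < β-γ) := ⟨h0, h1⟩
        simp only [cA, ncB, ncC, and_self, if_true, if_false, add_zero, zero_add, hc1]
      · have ncA : ¬(-β-γ ≤ y ∧ y < β-γ) := by rintro ⟨a, b⟩; linarith
        simp only [ncA, ncB, ncC, if_false, add_zero, zero_add, Real.logb_zero, mul_zero]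
    · have ncA : ¬(-β-γ ≤ y ∧ y < β-γ) := by rintro ⟨a, b⟩; linarith
      rcases lt_or_ge y (γ-β) with h2 | h2
      · have cB : (β-γ ≤ y ∧ y < γ-β) := ⟨h1, h2⟩
        have ncC : ¬(γ-β ≤ y ∧ y < γ+β) := by rintro ⟨a, b⟩; linarith
        simp only [ncA, cB, ncC, and_self, if_true, if_false, add_zero, zero_add, hc2]
      · have ncB : ¬(β-γ ≤ y ∧ y < γ-β) := by rintro ⟨a, b⟩; linarith
        rcases lt_or_ge y (γ+β) with h3 | h3
        · have cC : (γ-β ≤ y ∧ y < γ+β) := ⟨h2, h3⟩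
          simp only [ncA, ncB, cC, and_self, if_true, if_false, add_zero, zero_add, hc1]
        · have ncC : ¬(γ-β ≤ y ∧ y < γ+β) := by rintro ⟨a, b⟩; linarith
          simp only [ncA, ncB, ncC, if_false, add_zero, zero_add, Real.logb_zero, mul_zero]
  have int_ind : ∀ (a b c : ℝ), a ≤ b →
      (∫ y, (Set.Ico a b).indicator (fun _ => c) y) = (b - a) * c := by
    intro a b c hab
    rw [MeasureTheory.integral_indicator_const c measurableSet_Ico, measureReal_def, Real.volume_Ico,
      ENNReal.toReal_ofReal (by linarith), smul_eq_mul]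
  have mkint : ∀ (a b c : ℝ), Integrable (fun y => (Set.Ico a b).indicator (fun _ => c) y) := by
    intro a b c
    apply (integrableOn_const (by rw [Real.volume_Ico]; exact ENNReal.ofReal_lt_top.ne)).integrable_indicator measurableSet_Ico
  have iAB : Integrable (fun y => (Set.Ico (-β-γ) (β-γ)).indicator (fun _ => c1) y
      + (Set.Ico (β-γ) (γ-β)).indicator (fun _ => c2) y) :=
    (mkint (-β-γ) (β-γ) c1).add (mkint (β-γ) (γ-β) c2)
  rw [key, integral_add iAB (mkint (γ-β) (γ+β) c1),
    integral_add (mkint (-β-γ) (β-γ) c1) (mkint (β-γ) (γ-β) c2),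
    int_ind _ _ _ (by linarith), int_ind _ _ _ (by linarith), int_ind _ _ _ (by linarith)]
  have l1 : Real.logb 2 (1/(4*γ)) = -(1 + Real.logb 2 (2*γ)) := by
    rw [show (1:ℝ)/(4*γ) = (2*(2*γ))⁻¹ by ring, Real.logb_inv,
      Real.logb_mul (by norm_num) (by positivity),
      Real.logb_self_eq_one (by norm_num : (1:ℝ) < 2)]
  have l2 : Real.logb 2 (1/(2*γ)) = -Real.logb 2 (2*γ) := by
    rw [one_div, Real.logb_inv]
  rw [hc1, hc2, l1, l2]
  field_simp
  ring
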